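/- arXiv:1206.6345 — 7 statements merged into one kernel-verified Lean document; each statement's English description precedes it below -/
import Mathlib

section
/- Let k be a commutative ring with a derivation δ : k → k, and let δ act on matrices over k entrywise. Let A₀, B₁, …, B_r be n×n matrices over k such that δ(B_i) = 0 entrywise for all i, B_i · B_j = 0 for all i, j, and ⁅A₀, B₁⁆ = Σ_{i=1}^{r} γ_i • B_i for some γ₁, …, γ_r ∈ k. Let β₁, …, β_r ∈ k, set A := A₀ + Σ_{i=1}^{r} β_i • B_i, and suppose g ∈ k satisfies δ(g) = γ₁·g + β₁. Set P := 1 + g • B₁. Then P is invertible with inverse 1 − g • B₁, and the gauge transform satisfies P⁻¹ · (A·P − δ(P)) = A₀ + Σ_{i=2}^{r} (β_i + g·γ_i) • B_i; in particular the result contains no term in B₁. -/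
open Matrix Finset

/-- Partial reduction of a linear differential system: if `⁅A₀, B₁⁆ = Σ γᵢ • Bᵢ`, the `Bᵢ`
are constant and pairwise annihilate each other, and `g` solves `g' = γ₁ g + β₁`, then the
gauge transformation by `P = 1 + g • B₁` removes the `B₁`-term from
`A = A₀ + Σ βᵢ • Bᵢ`. -/
theorem partial_reduction
    (k : Type*) [CommRing k] (δ : k → k)
    (hδadd : ∀ a b : k, δ (a + b) = δ a + δ b)
    (hδmul : ∀ a b : k, δ (a * b) = a * δ b + δ a * b)
    (n r : ℕ)
    (A₀ : Matrix (Fin n) (Fin n) k) (B : Fin (r + 1) → Matrix (Fin n) (Fin n) k)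
    (hBconst : ∀ i, (B i).map δ = 0)
    (hBmul : ∀ i j, B i * B j = 0)
    (γ : Fin (r + 1) → k)
    (hbracket : ⁅A₀, B 0⁆ = ∑ i, γ i • B i)
    (β : Fin (r + 1) → k)
    (A : Matrix (Fin n) (Fin n) k) (hA : A = A₀ + ∑ i, β i • B i)
    (g : k) (hg : δ g = γ 0 * g + β 0)
    (P : Matrix (Fin n) (Fin n) k) (hP : P = 1 + g • B 0) :
    IsUnit P ∧ P⁻¹ = 1 - g • B 0 ∧
      P⁻¹ * (A * P - P.map δ) =
        A₀ + ∑ i ∈ Finset.univ.erase 0, (β i + g * γ i) • B i := by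
  have hδ0 : δ 0 = 0 := by have := hδadd 0 0; simpa using this
  have hδ1 : δ 1 = 0 := by have h := hδmul 1 1; simpa using h
  have hB0 : ∀ i j, δ (B 0 i j) = 0 := by
    intro i j
    have := congrFun (congrFun (hBconst 0) i) j
    simpa [Matrix.map_apply] using this
  have hPmap : P.map δ = δ g • B 0 := by
    subst hP
    ext i j
    simp only [Matrix.map_apply, Matrix.add_apply, Matrix.smul_apply, smul_eq_mul,
      Matrix.one_apply]
    rw [hδadd, hδmul]
    split <;> simp [hδ0, hδ1, hB0 i j]
  have hzero : ∀ a b : k, (a • B 0) * (b • B 0) = (0 : Matrix (Fin n) (Fin n) k) := by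
    intro a b
    rw [Matrix.smul_mul, Matrix.mul_smul, hBmul]
    simp
  have hPQ : P * (1 - g • B 0) = 1 := by
    rw [hP, mul_sub, mul_one, add_mul, one_mul, hzero]
    simp
  have hQP : (1 - g • B 0) * P = 1 := by
    rw [hP, sub_mul, one_mul, mul_add, mul_one, hzero]
    simp
  have hUnit : IsUnit P := by
    have := invertibleOfRightInverse _ _ hPQ
    exact isUnit_of_invertible P
  have hPinv : P⁻¹ = 1 - g • B 0 := Matrix.inv_eq_right_inv hPQ
  refine ⟨hUnit, hPinv, ?_⟩
  rw [hPinv, hPmap, hA, hP]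
  have hS1 : (∑ i, β i • B i) * B 0 = 0 := by
    rw [Finset.sum_mul]
    refine Finset.sum_eq_zero fun i _ => ?_
    rw [Matrix.smul_mul, hBmul]; simp
  have hSβ : B 0 * (∑ i, β i • B i) = 0 := by
    rw [Finset.mul_sum]
    refine Finset.sum_eq_zero fun i _ => ?_
    rw [Matrix.mul_smul, hBmul]; simp
  have hbr : A₀ * B 0 = B 0 * A₀ + ∑ i, γ i • B i := by
    rw [Ring.lie_def] at hbracket
    rw [← hbracket]; abel
  have h3 : B 0 * (A₀ * B 0) = 0 := by
    have hSγ : B 0 * (∑ i, γ i • B i) = 0 := by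
      rw [Finset.mul_sum]
      refine Finset.sum_eq_zero fun i _ => ?_
      rw [Matrix.mul_smul, hBmul]; simp
    rw [hbr, mul_add, ← mul_assoc, hBmul, hSγ]
    simp
  have e1 : (A₀ + ∑ i, β i • B i) * (1 + g • B 0)
      = A₀ + g • (A₀ * B 0) + ∑ i, β i • B i := by
    rw [mul_add, add_mul, add_mul, mul_one, mul_one, Matrix.mul_smul, Matrix.mul_smul, hS1]
    simp; abel
  rw [e1]
  have expand : (g • B 0) * (A₀ + g • (A₀ * B 0) + (∑ i, β i • B i) - δ g • B 0)
      = g • (B 0 * A₀) := by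
    simp only [mul_add, mul_sub, Matrix.mul_smul, Matrix.smul_mul, h3, hSβ, hBmul,
      smul_zero, add_zero, sub_zero]
  rw [sub_mul, one_mul, expand, hbr, smul_add]
  have hδgB : δ g • B 0 = (β 0 + g * γ 0) • B 0 := by
    rw [hg]; congr 1; ring
  rw [hδgB]
  have hterm : ∀ i : Fin (r+1), g • (γ i • B i) + β i • B i = (β i + g * γ i) • B i :=
    fun i => by rw [smul_smul, add_smul, add_comm]
  have hcomb : g • (∑ i, γ i • B i) + (∑ i, β i • B i)
      = (β 0 + g * γ 0) • B 0
        + ∑ i ∈ Finset.univ.erase (0 : Fin (r+1)), (β i + g * γ i) • B i := by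
    rw [Finset.smul_sum, ← Finset.sum_add_distrib]
    simp_rw [hterm]
    exact (Finset.add_sum_erase _ _ (Finset.mem_univ 0)).symm
  have final : A₀ + (g • (B 0 * A₀) + g • ∑ i, γ i • B i) + ∑ i, β i • B i
      - (β 0 + g * γ 0) • B 0 - g • (B 0 * A₀)
      = A₀ + (g • (∑ i, γ i • B i) + ∑ i, β i • B i) - (β 0 + g * γ 0) • B 0 := by
    abel
  rw [final, hcomb]
  abel
end

section
/- Let k be a commutative ring with a derivation δ : k → k, acting on matrices entrywise. Let A₀, B₁, …, B_r be n×n matrices over k with δ(A₀) = 0 and δ(B_i) = 0 entrywise, B_i · B_j = 0 for all i, j, and suppose ⁅A₀, B₁⁆ = λ • B₁ for some λ ∈ k with δ(λ) = 0. Let β₀, β₁, …, β_r ∈ k, set A := β₀ • A₀ + Σ_{i=1}^{r} β_i • B_i, and suppose g ∈ k satisfies δ(g) = λ·β₀·g + β₁. Then P := 1 + g • B₁ is invertible and P⁻¹ · (A·P − δ(P)) = β₀ • A₀ + Σ_{i=2}^{r} β_i • B_i. -/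
open Matrix Finset

/-- Partial reduction in the monogenous case: if `⁅A₀, B₁⁆ = λ • B₁` with `λ` constant,
the matrices `A₀, Bᵢ` are constant, the `Bᵢ` pairwise annihilate each other, and `g` solves
`g' = λ β₀ g + β₁`, then the gauge transformation by `P = 1 + g • B₁` turns
`A = β₀ • A₀ + Σ βᵢ • Bᵢ` into `β₀ • A₀ + Σ_{i ≥ 2} βᵢ • Bᵢ`. -/
theorem partial_reduction_eigenvalue
    (k : Type*) [CommRing k] (δ : k → k)
    (hδadd : ∀ a b : k, δ (a + b) = δ a + δ b)
    (hδmul : ∀ a b : k, δ (a * b) = a * δ b + δ a * b)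
    (n r : ℕ)
    (A₀ : Matrix (Fin n) (Fin n) k) (B : Fin (r + 1) → Matrix (Fin n) (Fin n) k)
    (hA₀const : A₀.map δ = 0)
    (hBconst : ∀ i, (B i).map δ = 0)
    (hBmul : ∀ i j, B i * B j = 0)
    (lam : k) (hlam : δ lam = 0)
    (hbracket : ⁅A₀, B 0⁆ = lam • B 0)
    (β₀ : k) (β : Fin (r + 1) → k)
    (A : Matrix (Fin n) (Fin n) k) (hA : A = β₀ • A₀ + ∑ i, β i • B i)
    (g : k) (hg : δ g = lam * β₀ * g + β 0)
    (P : Matrix (Fin n) (Fin n) k) (hP : P = 1 + g • B 0) :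
    IsUnit P ∧
      P⁻¹ * (A * P - P.map δ) =
        β₀ • A₀ + ∑ i ∈ Finset.univ.erase 0, β i • B i := by
  have hδ0 : δ 0 = 0 := by
    have := hδadd 0 0
    simp at this
    exact this
  have hδ1 : δ 1 = 0 := by
    have := hδmul 1 1
    simp at this
    exact this
  have hB0 : B 0 * B 0 = 0 := hBmul 0 0
  have hQ : P * (1 - g • B 0) = 1 := by
    rw [hP]
    simp [mul_sub, add_mul, smul_mul_assoc, mul_smul_comm, smul_smul, hB0]
  have hQ' : (1 - g • B 0) * P = 1 := by
    rw [hP]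
    simp [sub_mul, mul_add, smul_mul_assoc, mul_smul_comm, smul_smul, hB0]
  have hunit : IsUnit P := ⟨⟨P, 1 - g • B 0, hQ, hQ'⟩, rfl⟩
  have hinv : P⁻¹ = 1 - g • B 0 := Matrix.inv_eq_right_inv hQ
  have hmapδ : P.map δ = δ g • B 0 := by
    rw [hP]
    ext i j
    have hb := congrFun (congrFun (hBconst 0) i) j
    simp only [Matrix.map_apply, Matrix.add_apply, Matrix.smul_apply, Matrix.one_apply,
      smul_eq_mul] at *
    rw [hδadd, hδmul, hb]
    by_cases h : i = j <;> simp [h, hδ0, hδ1]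
  have hSum : (∑ i, β i • B i) = β 0 • B 0 + ∑ i ∈ Finset.univ.erase 0, β i • B i := by
    rw [← Finset.add_sum_erase _ _ (Finset.mem_univ 0)]
  set S := ∑ i ∈ Finset.univ.erase 0, β i • B i with hS
  have hSB : S * B 0 = 0 := by
    rw [hS, Finset.sum_mul]
    apply Finset.sum_eq_zero
    intro i _
    rw [smul_mul_assoc, hBmul i 0, smul_zero]
  have hBS : B 0 * S = 0 := by
    rw [hS, Finset.mul_sum]
    apply Finset.sum_eq_zero
    intro i _
    rw [mul_smul_comm, hBmul 0 i, smul_zero]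
  have hBA : B 0 * A₀ = A₀ * B 0 - lam • B 0 := by
    rw [Ring.lie_def] at hbracket
    linear_combination (norm := abel) -hbracket
  have hBAB : B 0 * (A₀ * B 0) = 0 := by
    rw [← mul_assoc, hBA, sub_mul, smul_mul_assoc, hB0, smul_zero, mul_assoc, hB0, mul_zero,
      zero_sub, neg_zero]
  refine ⟨hunit, ?_⟩
  rw [hinv, hmapδ, hA, hSum, hg, hP]
  simp only [mul_add, add_mul, mul_sub, sub_mul, mul_one, one_mul, smul_mul_assoc,
    mul_smul_comm, smul_smul, hB0, hSB, hBS, hBAB, hBA, smul_zero, mul_zero, zero_mul, smul_sub,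
    smul_add]
  module
end

section
/- Let k be a field, C a subfield of k, and A an n×n matrix over k. Suppose A = Σ_{i=1}^{r} a_i • (M_i mapped into k) = Σ_{j=1}^{s} b_j • (N_j mapped into k), where a₁,…,a_r ∈ k are linearly independent over C, b₁,…,b_s ∈ k are linearly independent over C, and M₁,…,M_r, N₁,…,N_s are n×n matrices with entries in C. Then the C-linear span of {M₁,…,M_r} in the space of n×n matrices over C equals the C-linear span of {N₁,…,N_s}. (Uniqueness of the Wei–Norman decomposition.) -/
open Matrix Finset

set_option synthInstance.maxHeartbeats 1000000
set_option maxHeartbeats 1000000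

/-- Applying a `C`-linear functional entrywise to a matrix over `k`, as a linear map. -/
def weiNormanMapLin (k : Type*) [Field k] (C : Subfield k) (n : ℕ)
    (A : Matrix (Fin n) (Fin n) k) : (k →ₗ[C] C) →ₗ[C] Matrix (Fin n) (Fin n) C where
  toFun φ := A.map φ
  map_add' φ ψ := by ext i j; simp [Matrix.map_apply]
  map_smul' c φ := by ext i j; simp [Matrix.map_apply]

theorem weiNorman_span_eq_range (k : Type*) [Field k] (C : Subfield k) (n r : ℕ)
    (A : Matrix (Fin n) (Fin n) k) (a : Fin r → k)
    (M : Fin r → Matrix (Fin n) (Fin n) C)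
    (ha : LinearIndependent C a)
    (hM : A = ∑ i, a i • (M i).map (fun c => (c : k))) :
    Submodule.span C (Set.range M) = LinearMap.range (weiNormanMapLin k C n A) := by
  have key : ∀ φ : k →ₗ[C] C, weiNormanMapLin k C n A φ = ∑ i, φ (a i) • M i := by
    intro φ
    ext p q
    simp only [weiNormanMapLin, LinearMap.coe_mk, AddHom.coe_mk, Matrix.map_apply, hM,
      Matrix.sum_apply, Matrix.smul_apply, map_sum]
    congr 1
    refine Finset.sum_congr rfl fun i _ => ?_
    have h1 : a i • ((M i p q : C) : k) = (M i p q) • a i := by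
      rw [smul_eq_mul, mul_comm]; rfl
    rw [h1, _root_.map_smul, smul_eq_mul, smul_eq_mul, mul_comm]
  apply le_antisymm
  · rw [Submodule.span_le]
    rintro _ ⟨i, rfl⟩
    -- construct a dual functional
    obtain ⟨q, hq⟩ := Submodule.exists_isCompl (Submodule.span C (Set.range a))
    set p := Submodule.span C (Set.range a)
    let B : Module.Basis (Fin r) C p := Module.Basis.span ha
    let proj : k →ₗ[C] p := p.projectionOnto q hq
    let φ : k →ₗ[C] C := (B.coord i) ∘ₗ proj
    refine ⟨φ, ?_⟩
    rw [key]
    have hφ : ∀ j, φ (a j) = if j = i then 1 else 0 := by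
      intro j
      have haj : proj (a j) = B j := by
        have : (B j : k) = a j := congrArg Subtype.val (Module.Basis.span_apply ha j)
        rw [← this]
        exact Submodule.projectionOnto_apply_left hq (B j)
      simp only [φ, LinearMap.comp_apply, haj, Module.Basis.coord_apply, Module.Basis.repr_self]
      exact Finsupp.single_apply
    simp only [hφ]
    rw [Finset.sum_eq_single i]
    · simp
    · intro j _ hji; simp [hji]
    · intro h; exact absurd (Finset.mem_univ i) h
  · rintro _ ⟨φ, rfl⟩
    rw [key]
    exact Submodule.sum_mem _ fun i _ =>
      Submodule.smul_mem _ _ (Submodule.subset_span ⟨i, rfl⟩)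

/-- Uniqueness of the Wei–Norman decomposition: if a matrix over `k` has two Wei–Norman
decompositions with respect to a subfield `C` of `k`, then the `C`-spans of the two families
of constant matrices coincide. -/
theorem weiNorman_unique
    (k : Type*) [Field k] (C : Subfield k) (n r s : ℕ)
    (A : Matrix (Fin n) (Fin n) k)
    (a : Fin r → k) (b : Fin s → k)
    (M : Fin r → Matrix (Fin n) (Fin n) C) (N : Fin s → Matrix (Fin n) (Fin n) C)
    (ha : LinearIndependent C a) (hb : LinearIndependent C b)
    (hM : A = ∑ i, a i • (M i).map (fun c => (c : k)))
    (hN : A = ∑ j, b j • (N j).map (fun c => (c : k))) :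
    Submodule.span C (Set.range M) = Submodule.span C (Set.range N) := by
  rw [weiNorman_span_eq_range k C n r A a M ha hM,
    weiNorman_span_eq_range k C n s A b N hb hN]
end

section
/- Let k be a field of characteristic zero with a derivation δ : k → k, acting on matrices entrywise, and let x ∈ k satisfy δ(x) = 1, x ≠ 0 and x² + 1 ≠ 0. Define the 4×4 matrices over k: A₁ with rows [0, 0, 2/x, 0], [0, 0, 0, 2/x], [2(x⁴ − 10x² + 1)/(x(x²+1)²), 0, 0, 0], [0, −12x/(x²+1)², 0, 0]; and P₁ with rows [−6(x−1)(x+1)x²/(x²+1)³, 0, −(x¹⁰ + 15x⁸ − 16x⁶ − 144x⁴ + 15x² + 1)/(12x²(x²+1)³), 0], [0, (x⁴ − 4x² + 1)/(x²+1)², 0, −(5x⁴ + 16x² − 13)/(3(x²+1)²)], [6x²(x⁴ − 4x² + 1)/(x²+1)⁴, 0, −(x¹² + 4x¹⁰ + 121x⁸ + 256x⁶ − 249x⁴ − 4x² − 1)/(12x²(x²+1)⁴), 0], [0, 6(x² − 1)x²/(x²+1)³, 0, (x⁶ − x⁴ − 17x² + 1)/(x²+1)³]. Then P₁ is invertible and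 the gauge transform satisfies P₁⁻¹·(A₁·P₁ − δ(P₁)) = (5/(3x)) • D, where D is the constant matrix with rows [0,0,1,0], [0,0,0,6/5], [0,0,0,0], [0,0,0,0]. -/
open Matrix

set_option maxHeartbeats 2000000 in
/-- Reduction of the first variational equation of the degenerate Hénon–Heiles system:
the explicit matrix `P₁` is invertible and gauge-transforms `A₁` into the reduced form
`(5/(3x)) • D`. -/
theorem henonHeiles_VE1_reduction
    (k : Type*) [Field k] [CharZero k] (δ : k → k)
    (hδadd : ∀ a b : k, δ (a + b) = δ a + δ b)
    (hδmul : ∀ a b : k, δ (a * b) = a * δ b + δ a * b)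
    (x : k) (hx : δ x = 1) (hx0 : x ≠ 0) (hx1 : x ^ 2 + 1 ≠ 0)
    (A₁ P₁ D : Matrix (Fin 4) (Fin 4) k)
    (hA₁ : A₁ = !![0, 0, 2/x, 0;
                   0, 0, 0, 2/x;
                   2*(x^4 - 10*x^2 + 1)/(x*(x^2+1)^2), 0, 0, 0;
                   0, -12*x/(x^2+1)^2, 0, 0])
    (hP₁ : P₁ = !![-6*(x-1)*(x+1)*x^2/(x^2+1)^3, 0,
                     -(x^10 + 15*x^8 - 16*x^6 - 144*x^4 + 15*x^2 + 1)/(12*x^2*(x^2+1)^3), 0;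
                   0, (x^4 - 4*x^2 + 1)/(x^2+1)^2, 0,
                     -(5*x^4 + 16*x^2 - 13)/(3*(x^2+1)^2);
                   6*x^2*(x^4 - 4*x^2 + 1)/(x^2+1)^4, 0,
                     -(x^12 + 4*x^10 + 121*x^8 + 256*x^6 - 249*x^4 - 4*x^2 - 1)/(12*x^2*(x^2+1)^4), 0;
                   0, 6*(x^2 - 1)*x^2/(x^2+1)^3, 0,
                     (x^6 - x^4 - 17*x^2 + 1)/(x^2+1)^3])
    (hD : D = !![0, 0, 1, 0;
                 0, 0, 0, 6/5;
                 0, 0, 0, 0;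
                 0, 0, 0, 0]) :
    IsUnit P₁ ∧ P₁⁻¹ * (A₁ * P₁ - P₁.map δ) = (5/(3*x)) • D := by

  have h0 : δ (0 : k) = 0 := by have := hδadd 0 0; simpa using this
  have h1 : δ (1 : k) = 0 := by have := hδmul 1 1; simpa using this
  have hneg : ∀ a : k, δ (-a) = -δ a := by
    intro a; have := hδadd a (-a); simp [h0] at this; linear_combination -this
  have hsub : ∀ a b : k, δ (a - b) = δ a - δ b := by
    intro a b; rw [sub_eq_add_neg, hδadd, hneg]; ring
  have hnat : ∀ n : ℕ, δ (n : k) = 0 := by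
    intro n; induction n with
    | zero => simpa using h0
    | succ m ih => push_cast; rw [hδadd, ih, h1]; ring
  have hc2 : δ (2 : k) = 0 := by simpa using hnat 2
  have hc3 : δ (3 : k) = 0 := by simpa using hnat 3
  have hc4 : δ (4 : k) = 0 := by simpa using hnat 4
  have hc5 : δ (5 : k) = 0 := by simpa using hnat 5
  have hc6 : δ (6 : k) = 0 := by simpa using hnat 6
  have hc10 : δ (10 : k) = 0 := by simpa using hnat 10
  have hc12 : δ (12 : k) = 0 := by simpa using hnat 12
  have hc13 : δ (13 : k) = 0 := by simpa using hnat 13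
  have hc15 : δ (15 : k) = 0 := by simpa using hnat 15
  have hc16 : δ (16 : k) = 0 := by simpa using hnat 16
  have hc17 : δ (17 : k) = 0 := by simpa using hnat 17
  have hc121 : δ (121 : k) = 0 := by simpa using hnat 121
  have hc144 : δ (144 : k) = 0 := by simpa using hnat 144
  have hc249 : δ (249 : k) = 0 := by simpa using hnat 249
  have hc256 : δ (256 : k) = 0 := by simpa using hnat 256
  have hinv : ∀ b : k, b ≠ 0 → δ b⁻¹ = -δ b / b ^ 2 := by
    intro b hb
    have h := hδmul b b⁻¹
    rw [mul_inv_cancel₀ hb, h1] at h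
    rw [eq_div_iff (pow_ne_zero 2 hb)]
    have hbb : b * b⁻¹ = 1 := mul_inv_cancel₀ hb
    linear_combination (-b) * h - δ b * hbb
  have hdiv : ∀ a b : k, b ≠ 0 → δ (a / b) = (δ a * b - a * δ b) / b ^ 2 := by
    intro a b hb
    rw [div_eq_mul_inv, hδmul, hinv b hb]
    field_simp
    ring
  have hp2 : δ (x ^ 2) = 2 * x := by rw [show (x:k)^2 = x * x by ring, hδmul, hx]; ring
  have hp3 : δ (x ^ 3) = 3 * x ^ 2 := by rw [show (x:k)^3 = x^2 * x by ring, hδmul, hp2, hx]; ring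
  have hp4 : δ (x ^ 4) = 4 * x ^ 3 := by rw [show (x:k)^4 = x^3 * x by ring, hδmul, hp3, hx]; ring
  have hp5 : δ (x ^ 5) = 5 * x ^ 4 := by rw [show (x:k)^5 = x^4 * x by ring, hδmul, hp4, hx]; ring
  have hp6 : δ (x ^ 6) = 6 * x ^ 5 := by rw [show (x:k)^6 = x^5 * x by ring, hδmul, hp5, hx]; ring
  have hp7 : δ (x ^ 7) = 7 * x ^ 6 := by rw [show (x:k)^7 = x^6 * x by ring, hδmul, hp6, hx]; ring
  have hp8 : δ (x ^ 8) = 8 * x ^ 7 := by rw [show (x:k)^8 = x^7 * x by ring, hδmul, hp7, hx]; ring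
  have hp9 : δ (x ^ 9) = 9 * x ^ 8 := by rw [show (x:k)^9 = x^8 * x by ring, hδmul, hp8, hx]; ring
  have hp10 : δ (x ^ 10) = 10 * x ^ 9 := by rw [show (x:k)^10 = x^9 * x by ring, hδmul, hp9, hx]; ring
  have hp11 : δ (x ^ 11) = 11 * x ^ 10 := by rw [show (x:k)^11 = x^10 * x by ring, hδmul, hp10, hx]; ring
  have hp12 : δ (x ^ 12) = 12 * x ^ 11 := by rw [show (x:k)^12 = x^11 * x by ring, hδmul, hp11, hx]; ring
  have hs : δ (x ^ 2 + 1) = 2 * x := by rw [hδadd, hp2, h1]; ring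
  have hq2 : δ ((x ^ 2 + 1) ^ 2) = 4 * x * (x ^ 2 + 1) := by rw [show ((x:k)^2+1)^2 = (x^2+1)*(x^2+1) by ring, hδmul, hs]; ring
  have hq3 : δ ((x ^ 2 + 1) ^ 3) = 6 * x * (x ^ 2 + 1) ^ 2 := by rw [show ((x:k)^2+1)^3 = (x^2+1)^2 * (x^2+1) by ring, hδmul, hq2, hs]; ring
  have hq4 : δ ((x ^ 2 + 1) ^ 4) = 8 * x * (x ^ 2 + 1) ^ 3 := by rw [show ((x:k)^2+1)^4 = (x^2+1)^3 * (x^2+1) by ring, hδmul, hq3, hs]; ring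
  have hD1 : ((x ^ 2 + 1) ^ 3 : k) ≠ 0 := pow_ne_zero 3 hx1
  have hD2 : (12 * x ^ 2 * (x ^ 2 + 1) ^ 3 : k) ≠ 0 := mul_ne_zero (mul_ne_zero (by norm_num) (pow_ne_zero 2 hx0)) (pow_ne_zero 3 hx1)
  have hD3 : ((x ^ 2 + 1) ^ 2 : k) ≠ 0 := pow_ne_zero 2 hx1
  have hD4 : (3 * (x ^ 2 + 1) ^ 2 : k) ≠ 0 := mul_ne_zero (by norm_num) (pow_ne_zero 2 hx1)
  have hD5 : ((x ^ 2 + 1) ^ 4 : k) ≠ 0 := pow_ne_zero 4 hx1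
  have hD6 : (12 * x ^ 2 * (x ^ 2 + 1) ^ 4 : k) ≠ 0 := mul_ne_zero (mul_ne_zero (by norm_num) (pow_ne_zero 2 hx0)) (pow_ne_zero 4 hx1)
  have h3 : (3:k) ≠ 0 := by norm_num
  have h5 : (5:k) ≠ 0 := by norm_num
  have hone : (1 : Matrix (Fin 4) (Fin 4) k) =
      !![1,0,0,0; 0,1,0,0; 0,0,1,0; 0,0,0,1] := by
    ext i j
    fin_cases i <;> fin_cases j <;>
      simp [Matrix.one_apply, Matrix.vecHead, Matrix.vecTail]
  subst hA₁ hP₁ hD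
  set Q : Matrix (Fin 4) (Fin 4) k := !![-(x^12 + 4*x^10 + 121*x^8 + 256*x^6 - 249*x^4 - 4*x^2 - 1)/(12*x^2*(x^2+1)^4), 0,
                     (x^10 + 15*x^8 - 16*x^6 - 144*x^4 + 15*x^2 + 1)/(12*x^2*(x^2+1)^3), 0;
                   0, (x^6 - x^4 - 17*x^2 + 1)/(x^2+1)^3, 0,
                     (5*x^4 + 16*x^2 - 13)/(3*(x^2+1)^2);
                   -6*x^2*(x^4 - 4*x^2 + 1)/(x^2+1)^4, 0,
                     -6*(x^2 - 1)*x^2/(x^2+1)^3, 0;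
                   0, -6*(x^2 - 1)*x^2/(x^2+1)^3, 0,
                     (x^4 - 4*x^2 + 1)/(x^2+1)^2] with hQdef
  have hQP : Q * !![-6*(x-1)*(x+1)*x^2/(x^2+1)^3, 0,
                     -(x^10 + 15*x^8 - 16*x^6 - 144*x^4 + 15*x^2 + 1)/(12*x^2*(x^2+1)^3), 0;
                   0, (x^4 - 4*x^2 + 1)/(x^2+1)^2, 0,
                     -(5*x^4 + 16*x^2 - 13)/(3*(x^2+1)^2);
                   6*x^2*(x^4 - 4*x^2 + 1)/(x^2+1)^4, 0,
                     -(x^12 + 4*x^10 + 121*x^8 + 256*x^6 - 249*x^4 - 4*x^2 - 1)/(12*x^2*(x^2+1)^4), 0;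
                   0, 6*(x^2 - 1)*x^2/(x^2+1)^3, 0,
                     (x^6 - x^4 - 17*x^2 + 1)/(x^2+1)^3] = 1 := by
    ext i j
    fin_cases i <;> fin_cases j <;>
      simp [hQdef, ← neg_div, Matrix.mul_apply, Matrix.sub_apply, Matrix.map_apply, Matrix.smul_apply,
        Fin.sum_univ_four, Fin.isValue, Matrix.cons_val', Matrix.cons_val_zero,
        Matrix.cons_val_one, Matrix.head_cons, Matrix.empty_val', Matrix.cons_val_fin_one,
        Matrix.head_fin_const, Matrix.cons_val_two, Matrix.cons_val_three, Matrix.tail_cons,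
        Matrix.vecHead, Matrix.vecTail, smul_eq_mul, hone, h0,
        zero_mul, mul_zero, add_zero, zero_add, mul_one, sub_zero, div_mul_div_comm]
    · rw [div_add_div _ _ (show (12*x^2*(x^2+1)^4 * ((x^2+1)^3) : k) ≠ 0 from mul_ne_zero (hD6) (pow_ne_zero 3 hx1)) (show (12*x^2*(x^2+1)^3 * ((x^2+1)^4) : k) ≠ 0 from mul_ne_zero (hD2) (pow_ne_zero 4 hx1)), div_eq_one_iff_eq (mul_ne_zero (show (12*x^2*(x^2+1)^4 * ((x^2+1)^3) : k) ≠ 0 from mul_ne_zero (hD6) (pow_ne_zero 3 hx1)) (show (12*x^2*(x^2+1)^3 * ((x^2+1)^4) : k) ≠ 0 from mul_ne_zero (hD2) (pow_ne_zero 4 hx1)))]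
      ring
    · rw [div_add_div _ _ (show (12*x^2*(x^2+1)^4 * (12*x^2*(x^2+1)^3) : k) ≠ 0 from mul_ne_zero (hD6) (hD2)) (show (12*x^2*(x^2+1)^3 * (12*x^2*(x^2+1)^4) : k) ≠ 0 from mul_ne_zero (hD2) (hD6)), div_eq_zero_iff]
      exact Or.inl (by ring)
    · rw [div_add_div _ _ (show ((x^2+1)^3 * ((x^2+1)^2) : k) ≠ 0 from mul_ne_zero (pow_ne_zero 3 hx1) (pow_ne_zero 2 hx1)) (show (3*(x^2+1)^2 * ((x^2+1)^3) : k) ≠ 0 from mul_ne_zero (mul_ne_zero h3 (pow_ne_zero 2 hx1)) (pow_ne_zero 3 hx1)), div_eq_one_iff_eq (mul_ne_zero (show ((x^2+1)^3 * ((x^2+1)^2) : k) ≠ 0 from mul_ne_zero (pow_ne_zero 3 hx1) (pow_ne_zero 2 hx1)) (show (3*(x^2+1)^2 * ((x^2+1)^3) : k) ≠ 0 from mul_ne_zero (mul_ne_zero h3 (pow_ne_zero 2 hx1)) (pow_ne_zero 3 hx1)))]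
      ring
    · rw [div_add_div _ _ (show ((x^2+1)^3 * (3*(x^2+1)^2) : k) ≠ 0 from mul_ne_zero (pow_ne_zero 3 hx1) (mul_ne_zero h3 (pow_ne_zero 2 hx1))) (show (3*(x^2+1)^2 * ((x^2+1)^3) : k) ≠ 0 from mul_ne_zero (mul_ne_zero h3 (pow_ne_zero 2 hx1)) (pow_ne_zero 3 hx1)), div_eq_zero_iff]
      exact Or.inl (by ring)
    · rw [div_add_div _ _ (show ((x^2+1)^4 * ((x^2+1)^3) : k) ≠ 0 from mul_ne_zero (pow_ne_zero 4 hx1) (pow_ne_zero 3 hx1)) (show ((x^2+1)^3 * ((x^2+1)^4) : k) ≠ 0 from mul_ne_zero (pow_ne_zero 3 hx1) (pow_ne_zero 4 hx1)), div_eq_zero_iff]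
      exact Or.inl (by ring)
    · rw [div_add_div _ _ (show ((x^2+1)^4 * (12*x^2*(x^2+1)^3) : k) ≠ 0 from mul_ne_zero (pow_ne_zero 4 hx1) (hD2)) (show ((x^2+1)^3 * (12*x^2*(x^2+1)^4) : k) ≠ 0 from mul_ne_zero (pow_ne_zero 3 hx1) (hD6)), div_eq_one_iff_eq (mul_ne_zero (show ((x^2+1)^4 * (12*x^2*(x^2+1)^3) : k) ≠ 0 from mul_ne_zero (pow_ne_zero 4 hx1) (hD2)) (show ((x^2+1)^3 * (12*x^2*(x^2+1)^4) : k) ≠ 0 from mul_ne_zero (pow_ne_zero 3 hx1) (hD6)))]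
      ring
    · rw [div_add_div _ _ (show ((x^2+1)^3 * ((x^2+1)^2) : k) ≠ 0 from mul_ne_zero (pow_ne_zero 3 hx1) (pow_ne_zero 2 hx1)) (show ((x^2+1)^2 * ((x^2+1)^3) : k) ≠ 0 from mul_ne_zero (pow_ne_zero 2 hx1) (pow_ne_zero 3 hx1)), div_eq_zero_iff]
      exact Or.inl (by ring)
    · rw [div_add_div _ _ (show ((x^2+1)^3 * (3*(x^2+1)^2) : k) ≠ 0 from mul_ne_zero (pow_ne_zero 3 hx1) (mul_ne_zero h3 (pow_ne_zero 2 hx1))) (show ((x^2+1)^2 * ((x^2+1)^3) : k) ≠ 0 from mul_ne_zero (pow_ne_zero 2 hx1) (pow_ne_zero 3 hx1)), div_eq_one_iff_eq (mul_ne_zero (show ((x^2+1)^3 * (3*(x^2+1)^2) : k) ≠ 0 from mul_ne_zero (pow_ne_zero 3 hx1) (mul_ne_zero h3 (pow_ne_zero 2 hx1))) (show ((x^2+1)^2 * ((x^2+1)^3) : k) ≠ 0 from mul_ne_zero (pow_ne_zero 2 hx1) (pow_ne_zero 3 hx1)))]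
      ring
  have hPQ : (!![-6*(x-1)*(x+1)*x^2/(x^2+1)^3, 0,
                     -(x^10 + 15*x^8 - 16*x^6 - 144*x^4 + 15*x^2 + 1)/(12*x^2*(x^2+1)^3), 0;
                   0, (x^4 - 4*x^2 + 1)/(x^2+1)^2, 0,
                     -(5*x^4 + 16*x^2 - 13)/(3*(x^2+1)^2);
                   6*x^2*(x^4 - 4*x^2 + 1)/(x^2+1)^4, 0,
                     -(x^12 + 4*x^10 + 121*x^8 + 256*x^6 - 249*x^4 - 4*x^2 - 1)/(12*x^2*(x^2+1)^4), 0;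
                   0, 6*(x^2 - 1)*x^2/(x^2+1)^3, 0,
                     (x^6 - x^4 - 17*x^2 + 1)/(x^2+1)^3] : Matrix (Fin 4) (Fin 4) k) * Q = 1 := by
    ext i j
    fin_cases i <;> fin_cases j <;>
      simp [hQdef, ← neg_div, Matrix.mul_apply, Matrix.sub_apply, Matrix.map_apply, Matrix.smul_apply,
        Fin.sum_univ_four, Fin.isValue, Matrix.cons_val', Matrix.cons_val_zero,
        Matrix.cons_val_one, Matrix.head_cons, Matrix.empty_val', Matrix.cons_val_fin_one,
        Matrix.head_fin_const, Matrix.cons_val_two, Matrix.cons_val_three, Matrix.tail_cons,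
        Matrix.vecHead, Matrix.vecTail, smul_eq_mul, hone, h0,
        zero_mul, mul_zero, add_zero, zero_add, mul_one, sub_zero, div_mul_div_comm]
    · rw [div_add_div _ _ (show ((x^2+1)^3 * (12*x^2*(x^2+1)^4) : k) ≠ 0 from mul_ne_zero (pow_ne_zero 3 hx1) (hD6)) (show (12*x^2*(x^2+1)^3 * ((x^2+1)^4) : k) ≠ 0 from mul_ne_zero (hD2) (pow_ne_zero 4 hx1)), div_eq_one_iff_eq (mul_ne_zero (show ((x^2+1)^3 * (12*x^2*(x^2+1)^4) : k) ≠ 0 from mul_ne_zero (pow_ne_zero 3 hx1) (hD6)) (show (12*x^2*(x^2+1)^3 * ((x^2+1)^4) : k) ≠ 0 from mul_ne_zero (hD2) (pow_ne_zero 4 hx1)))]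
      ring
    · rw [div_add_div _ _ (show ((x^2+1)^3 * (12*x^2*(x^2+1)^3) : k) ≠ 0 from mul_ne_zero (pow_ne_zero 3 hx1) (hD2)) (show (12*x^2*(x^2+1)^3 * ((x^2+1)^3) : k) ≠ 0 from mul_ne_zero (hD2) (pow_ne_zero 3 hx1)), div_eq_zero_iff]
      exact Or.inl (by ring)
    · rw [div_add_div _ _ (show ((x^2+1)^2 * ((x^2+1)^3) : k) ≠ 0 from mul_ne_zero (pow_ne_zero 2 hx1) (pow_ne_zero 3 hx1)) (show (3*(x^2+1)^2 * ((x^2+1)^3) : k) ≠ 0 from mul_ne_zero (mul_ne_zero h3 (pow_ne_zero 2 hx1)) (pow_ne_zero 3 hx1)), div_eq_one_iff_eq (mul_ne_zero (show ((x^2+1)^2 * ((x^2+1)^3) : k) ≠ 0 from mul_ne_zero (pow_ne_zero 2 hx1) (pow_ne_zero 3 hx1)) (show (3*(x^2+1)^2 * ((x^2+1)^3) : k) ≠ 0 from mul_ne_zero (mul_ne_zero h3 (pow_ne_zero 2 hx1)) (pow_ne_zero 3 hx1)))]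
      ring
    · rw [div_add_div _ _ (show ((x^2+1)^2 * (3*(x^2+1)^2) : k) ≠ 0 from mul_ne_zero (pow_ne_zero 2 hx1) (mul_ne_zero h3 (pow_ne_zero 2 hx1))) (show (3*(x^2+1)^2 * ((x^2+1)^2) : k) ≠ 0 from mul_ne_zero (mul_ne_zero h3 (pow_ne_zero 2 hx1)) (pow_ne_zero 2 hx1)), div_eq_zero_iff]
      exact Or.inl (by ring)
    · rw [div_add_div _ _ (show ((x^2+1)^4 * (12*x^2*(x^2+1)^4) : k) ≠ 0 from mul_ne_zero (pow_ne_zero 4 hx1) (hD6)) (show (12*x^2*(x^2+1)^4 * ((x^2+1)^4) : k) ≠ 0 from mul_ne_zero (hD6) (pow_ne_zero 4 hx1)), div_eq_zero_iff]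
      exact Or.inl (by ring)
    · rw [div_add_div _ _ (show ((x^2+1)^4 * (12*x^2*(x^2+1)^3) : k) ≠ 0 from mul_ne_zero (pow_ne_zero 4 hx1) (hD2)) (show (12*x^2*(x^2+1)^4 * ((x^2+1)^3) : k) ≠ 0 from mul_ne_zero (hD6) (pow_ne_zero 3 hx1)), div_eq_one_iff_eq (mul_ne_zero (show ((x^2+1)^4 * (12*x^2*(x^2+1)^3) : k) ≠ 0 from mul_ne_zero (pow_ne_zero 4 hx1) (hD2)) (show (12*x^2*(x^2+1)^4 * ((x^2+1)^3) : k) ≠ 0 from mul_ne_zero (hD6) (pow_ne_zero 3 hx1)))]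
      ring
    · rw [div_add_div _ _ (show ((x^2+1)^3 * ((x^2+1)^3) : k) ≠ 0 from mul_ne_zero (pow_ne_zero 3 hx1) (pow_ne_zero 3 hx1)) (show ((x^2+1)^3 * ((x^2+1)^3) : k) ≠ 0 from mul_ne_zero (pow_ne_zero 3 hx1) (pow_ne_zero 3 hx1)), div_eq_zero_iff]
      exact Or.inl (by ring)
    · rw [div_add_div _ _ (show ((x^2+1)^3 * (3*(x^2+1)^2) : k) ≠ 0 from mul_ne_zero (pow_ne_zero 3 hx1) (mul_ne_zero h3 (pow_ne_zero 2 hx1))) (show ((x^2+1)^3 * ((x^2+1)^2) : k) ≠ 0 from mul_ne_zero (pow_ne_zero 3 hx1) (pow_ne_zero 2 hx1)), div_eq_one_iff_eq (mul_ne_zero (show ((x^2+1)^3 * (3*(x^2+1)^2) : k) ≠ 0 from mul_ne_zero (pow_ne_zero 3 hx1) (mul_ne_zero h3 (pow_ne_zero 2 hx1))) (show ((x^2+1)^3 * ((x^2+1)^2) : k) ≠ 0 from mul_ne_zero (pow_ne_zero 3 hx1) (pow_ne_zero 2 hx1)))]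
      ring
  refine ⟨⟨⟨_, Q, hPQ, hQP⟩, rfl⟩, ?_⟩
  have key : (!![0, 0, 2/x, 0;
                   0, 0, 0, 2/x;
                   2*(x^4 - 10*x^2 + 1)/(x*(x^2+1)^2), 0, 0, 0;
                   0, -12*x/(x^2+1)^2, 0, 0] : Matrix (Fin 4) (Fin 4) k) * !![-6*(x-1)*(x+1)*x^2/(x^2+1)^3, 0,
                     -(x^10 + 15*x^8 - 16*x^6 - 144*x^4 + 15*x^2 + 1)/(12*x^2*(x^2+1)^3), 0;
                   0, (x^4 - 4*x^2 + 1)/(x^2+1)^2, 0,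
                     -(5*x^4 + 16*x^2 - 13)/(3*(x^2+1)^2);
                   6*x^2*(x^4 - 4*x^2 + 1)/(x^2+1)^4, 0,
                     -(x^12 + 4*x^10 + 121*x^8 + 256*x^6 - 249*x^4 - 4*x^2 - 1)/(12*x^2*(x^2+1)^4), 0;
                   0, 6*(x^2 - 1)*x^2/(x^2+1)^3, 0,
                     (x^6 - x^4 - 17*x^2 + 1)/(x^2+1)^3] -
      Matrix.map !![-6*(x-1)*(x+1)*x^2/(x^2+1)^3, 0,
                     -(x^10 + 15*x^8 - 16*x^6 - 144*x^4 + 15*x^2 + 1)/(12*x^2*(x^2+1)^3), 0;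
                   0, (x^4 - 4*x^2 + 1)/(x^2+1)^2, 0,
                     -(5*x^4 + 16*x^2 - 13)/(3*(x^2+1)^2);
                   6*x^2*(x^4 - 4*x^2 + 1)/(x^2+1)^4, 0,
                     -(x^12 + 4*x^10 + 121*x^8 + 256*x^6 - 249*x^4 - 4*x^2 - 1)/(12*x^2*(x^2+1)^4), 0;
                   0, 6*(x^2 - 1)*x^2/(x^2+1)^3, 0,
                     (x^6 - x^4 - 17*x^2 + 1)/(x^2+1)^3] δ =
      !![-6*(x-1)*(x+1)*x^2/(x^2+1)^3, 0,
                     -(x^10 + 15*x^8 - 16*x^6 - 144*x^4 + 15*x^2 + 1)/(12*x^2*(x^2+1)^3), 0;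
                   0, (x^4 - 4*x^2 + 1)/(x^2+1)^2, 0,
                     -(5*x^4 + 16*x^2 - 13)/(3*(x^2+1)^2);
                   6*x^2*(x^4 - 4*x^2 + 1)/(x^2+1)^4, 0,
                     -(x^12 + 4*x^10 + 121*x^8 + 256*x^6 - 249*x^4 - 4*x^2 - 1)/(12*x^2*(x^2+1)^4), 0;
                   0, 6*(x^2 - 1)*x^2/(x^2+1)^3, 0,
                     (x^6 - x^4 - 17*x^2 + 1)/(x^2+1)^3] *
      ((5/(3*x)) • !![0, 0, 1, 0; 0, 0, 0, 6/5; 0, 0, 0, 0; 0, 0, 0, 0]) := by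
    ext i j
    fin_cases i <;> fin_cases j <;>
      simp [← neg_div, Matrix.mul_apply, Matrix.sub_apply, Matrix.map_apply, Matrix.smul_apply,
        Fin.sum_univ_four, Fin.isValue, Matrix.cons_val', Matrix.cons_val_zero,
        Matrix.cons_val_one, Matrix.head_cons, Matrix.empty_val', Matrix.cons_val_fin_one,
        Matrix.head_fin_const, Matrix.cons_val_two, Matrix.cons_val_three, Matrix.tail_cons,
        Matrix.vecHead, Matrix.vecTail, smul_eq_mul, hone, h0,
        zero_mul, mul_zero, add_zero, zero_add, mul_one, sub_zero, div_mul_div_comm]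
    · rw [hdiv _ _ hD1]
      simp only [hδadd, hsub, hneg, hδmul, hx, h0, h1, hc2, hc3, hc4, hc5, hc6, hc10, hc12, hc13, hc15, hc16, hc17, hc121, hc144, hc249, hc256, hp2, hp3, hp4, hp5, hp6, hp7, hp8, hp9, hp10, hp11, hp12, hs, hq2, hq3, hq4]
      rw [div_sub_div _ _ (show (x * ((x^2+1)^4) : k) ≠ 0 from mul_ne_zero (hx0) (pow_ne_zero 4 hx1)) (show (((x^2+1)^3)^2 : k) ≠ 0 from pow_ne_zero 2 (pow_ne_zero 3 hx1)), div_eq_zero_iff]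
      exact Or.inl (by ring)
    · rw [hdiv _ _ hD2]
      simp only [hδadd, hsub, hneg, hδmul, hx, h0, h1, hc2, hc3, hc4, hc5, hc6, hc10, hc12, hc13, hc15, hc16, hc17, hc121, hc144, hc249, hc256, hp2, hp3, hp4, hp5, hp6, hp7, hp8, hp9, hp10, hp11, hp12, hs, hq2, hq3, hq4]
      rw [div_sub_div _ _ (show (x * (12*x^2*(x^2+1)^4) : k) ≠ 0 from mul_ne_zero (hx0) (hD6)) (show ((12*x^2*(x^2+1)^3)^2 : k) ≠ 0 from pow_ne_zero 2 (hD2)), div_eq_div_iff (mul_ne_zero (show (x * (12*x^2*(x^2+1)^4) : k) ≠ 0 from mul_ne_zero (hx0) (hD6)) (show ((12*x^2*(x^2+1)^3)^2 : k) ≠ 0 from pow_ne_zero 2 (hD2))) (show ((x^2+1)^3 * (3*x) : k) ≠ 0 from mul_ne_zero (pow_ne_zero 3 hx1) (mul_ne_zero h3 hx0))]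
      ring
    · rw [hdiv _ _ hD3]
      simp only [hδadd, hsub, hneg, hδmul, hx, h0, h1, hc2, hc3, hc4, hc5, hc6, hc10, hc12, hc13, hc15, hc16, hc17, hc121, hc144, hc249, hc256, hp2, hp3, hp4, hp5, hp6, hp7, hp8, hp9, hp10, hp11, hp12, hs, hq2, hq3, hq4]
      rw [div_sub_div _ _ (show (x * ((x^2+1)^3) : k) ≠ 0 from mul_ne_zero (hx0) (pow_ne_zero 3 hx1)) (show (((x^2+1)^2)^2 : k) ≠ 0 from pow_ne_zero 2 (pow_ne_zero 2 hx1)), div_eq_zero_iff]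
      exact Or.inl (by ring)
    · rw [hdiv _ _ hD4]
      simp only [hδadd, hsub, hneg, hδmul, hx, h0, h1, hc2, hc3, hc4, hc5, hc6, hc10, hc12, hc13, hc15, hc16, hc17, hc121, hc144, hc249, hc256, hp2, hp3, hp4, hp5, hp6, hp7, hp8, hp9, hp10, hp11, hp12, hs, hq2, hq3, hq4]
      rw [div_sub_div _ _ (show (x * ((x^2+1)^3) : k) ≠ 0 from mul_ne_zero (hx0) (pow_ne_zero 3 hx1)) (show ((3*(x^2+1)^2)^2 : k) ≠ 0 from pow_ne_zero 2 (mul_ne_zero h3 (pow_ne_zero 2 hx1))), div_eq_div_iff (mul_ne_zero (show (x * ((x^2+1)^3) : k) ≠ 0 from mul_ne_zero (hx0) (pow_ne_zero 3 hx1)) (show ((3*(x^2+1)^2)^2 : k) ≠ 0 from pow_ne_zero 2 (mul_ne_zero h3 (pow_ne_zero 2 hx1)))) (show ((x^2+1)^2 * (3*x) : k) ≠ 0 from mul_ne_zero (pow_ne_zero 2 hx1) (mul_ne_zero h3 hx0))]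
      ring
    · rw [hdiv _ _ hD5]
      simp only [hδadd, hsub, hneg, hδmul, hx, h0, h1, hc2, hc3, hc4, hc5, hc6, hc10, hc12, hc13, hc15, hc16, hc17, hc121, hc144, hc249, hc256, hp2, hp3, hp4, hp5, hp6, hp7, hp8, hp9, hp10, hp11, hp12, hs, hq2, hq3, hq4]
      rw [div_sub_div _ _ (show (x*(x^2+1)^2 * ((x^2+1)^3) : k) ≠ 0 from mul_ne_zero (mul_ne_zero hx0 (pow_ne_zero 2 hx1)) (pow_ne_zero 3 hx1)) (show (((x^2+1)^4)^2 : k) ≠ 0 from pow_ne_zero 2 (pow_ne_zero 4 hx1)), div_eq_zero_iff]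
      exact Or.inl (by ring)
    · rw [hdiv _ _ hD6]
      simp only [hδadd, hsub, hneg, hδmul, hx, h0, h1, hc2, hc3, hc4, hc5, hc6, hc10, hc12, hc13, hc15, hc16, hc17, hc121, hc144, hc249, hc256, hp2, hp3, hp4, hp5, hp6, hp7, hp8, hp9, hp10, hp11, hp12, hs, hq2, hq3, hq4]
      rw [div_sub_div _ _ (show (x*(x^2+1)^2 * (12*x^2*(x^2+1)^3) : k) ≠ 0 from mul_ne_zero (mul_ne_zero hx0 (pow_ne_zero 2 hx1)) (hD2)) (show ((12*x^2*(x^2+1)^4)^2 : k) ≠ 0 from pow_ne_zero 2 (hD6)), div_eq_div_iff (mul_ne_zero (show (x*(x^2+1)^2 * (12*x^2*(x^2+1)^3) : k) ≠ 0 from mul_ne_zero (mul_ne_zero hx0 (pow_ne_zero 2 hx1)) (hD2)) (show ((12*x^2*(x^2+1)^4)^2 : k) ≠ 0 from pow_ne_zero 2 (hD6))) (show ((x^2+1)^4 * (3*x) : k) ≠ 0 from mul_ne_zero (pow_ne_zero 4 hx1) (mul_ne_zero h3 hx0))]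
      ring
    · rw [hdiv _ _ hD1]
      simp only [hδadd, hsub, hneg, hδmul, hx, h0, h1, hc2, hc3, hc4, hc5, hc6, hc10, hc12, hc13, hc15, hc16, hc17, hc121, hc144, hc249, hc256, hp2, hp3, hp4, hp5, hp6, hp7, hp8, hp9, hp10, hp11, hp12, hs, hq2, hq3, hq4]
      rw [div_sub_div _ _ (show ((x^2+1)^2 * ((x^2+1)^2) : k) ≠ 0 from mul_ne_zero (pow_ne_zero 2 hx1) (pow_ne_zero 2 hx1)) (show (((x^2+1)^3)^2 : k) ≠ 0 from pow_ne_zero 2 (pow_ne_zero 3 hx1)), div_eq_zero_iff]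
      exact Or.inl (by ring)
    · rw [hdiv _ _ hD1]
      simp only [hδadd, hsub, hneg, hδmul, hx, h0, h1, hc2, hc3, hc4, hc5, hc6, hc10, hc12, hc13, hc15, hc16, hc17, hc121, hc144, hc249, hc256, hp2, hp3, hp4, hp5, hp6, hp7, hp8, hp9, hp10, hp11, hp12, hs, hq2, hq3, hq4]
      rw [div_sub_div _ _ (show ((x^2+1)^2 * (3*(x^2+1)^2) : k) ≠ 0 from mul_ne_zero (pow_ne_zero 2 hx1) (mul_ne_zero h3 (pow_ne_zero 2 hx1))) (show (((x^2+1)^3)^2 : k) ≠ 0 from pow_ne_zero 2 (pow_ne_zero 3 hx1)), div_eq_div_iff (mul_ne_zero (show ((x^2+1)^2 * (3*(x^2+1)^2) : k) ≠ 0 from mul_ne_zero (pow_ne_zero 2 hx1) (mul_ne_zero h3 (pow_ne_zero 2 hx1))) (show (((x^2+1)^3)^2 : k) ≠ 0 from pow_ne_zero 2 (pow_ne_zero 3 hx1))) (show ((x^2+1)^3 * (3*x) : k) ≠ 0 from mul_ne_zero (pow_ne_zero 3 hx1) (mul_ne_zero h3 hx0))]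
      ring
  rw [key, Matrix.inv_eq_left_inv hQP, ← Matrix.mul_assoc, hQP, Matrix.one_mul]
end

section
/- Let L be a nonzero rational function over ℂ, written in lowest terms as L = a/b with a, b polynomials, such that b is squarefree, b is not a unit, and deg a < deg b (i.e., L is a nonzero proper rational function having only simple poles). Then there is no rational function g over ℂ whose derivative equals L, where the derivative on ℂ(X) is the unique derivation extending the derivative of polynomials (so that (p/q)' = (p'q − pq')/q²). -/
open Polynomial

private lemma aux_X_sub_C_mul_deriv (c : ℂ) (k : ℕ) :
    (X - C c) * derivative ((X - C c) ^ k) = C (k : ℂ) * (X - C c) ^ k := by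
  rw [derivative_X_sub_C_pow]
  cases k with
  | zero => simp
  | succ n =>
    rw [Nat.succ_sub_one]
    push_cast
    ring

/-- A nonzero proper rational function with only simple poles (lowest-terms denominator
squarefree and not a unit) has no antiderivative in `ℂ(X)`: no rational function `g = p/q`
has derivative `(p'q − pq')/q²` equal to `L`. -/
theorem no_rational_antiderivative_simple_poles
    (L : RatFunc ℂ) (hL0 : L ≠ 0)
    (a b : Polynomial ℂ)
    (hcop : IsCoprime a b)
    (hsf : Squarefree b) (hbu : ¬ IsUnit b)
    (hdeg : a.natDegree < b.natDegree)
    (hL : L = algebraMap (Polynomial ℂ) (RatFunc ℂ) a /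
              algebraMap (Polynomial ℂ) (RatFunc ℂ) b) :
    ¬ ∃ p q : Polynomial ℂ, q ≠ 0 ∧
        algebraMap (Polynomial ℂ) (RatFunc ℂ) (derivative p * q - p * derivative q) /
          algebraMap (Polynomial ℂ) (RatFunc ℂ) (q ^ 2) = L := by
  rintro ⟨p, q, hq0, heq⟩
  have hb0 : b ≠ 0 := hsf.ne_zero
  have ha0 : a ≠ 0 := by
    rintro rfl
    rw [map_zero, zero_div] at hL
    exact hL0 hL
  set N := derivative p * q - p * derivative q with hNdef
  have hq2 : (q ^ 2 : ℂ[X]) ≠ 0 := pow_ne_zero _ hq0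
  -- cross-multiplied polynomial identity
  have key : N * b = a * q ^ 2 := by
    have h := heq.trans hL
    rw [div_eq_div_iff (RatFunc.algebraMap_ne_zero hq2) (RatFunc.algebraMap_ne_zero hb0),
      ← map_mul, ← map_mul] at h
    exact RatFunc.algebraMap_injective ℂ h
  have hNb0 : N * b ≠ 0 := by
    rw [key]; exact mul_ne_zero ha0 hq2
  have hN0 : N ≠ 0 := left_ne_zero_of_mul hNb0
  have hp0 : p ≠ 0 := by
    rintro rfl
    simp [hNdef] at hN0
  -- choose a root of b
  have hdegb : 0 < b.degree := natDegree_pos_iff_degree_pos.mp (Nat.pos_of_ne_zero (by omega))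
  obtain ⟨c, hc⟩ : ∃ z : ℂ, IsRoot b z := Complex.exists_root hdegb
  -- root multiplicities
  have hrb : rootMultiplicity c b = 1 := by
    have h1 : 1 ≤ rootMultiplicity c b := (rootMultiplicity_pos hb0).mpr hc
    have h2 : rootMultiplicity c b < 2 := by
      by_contra h
      push_neg at h
      have : (X - C c) ^ 2 ∣ b := (le_rootMultiplicity_iff hb0).mp h
      rw [sq] at this
      exact (not_isUnit_X_sub_C c) (hsf _ this)
    omega
  have hra : rootMultiplicity c a = 0 := by
    apply rootMultiplicity_eq_zero
    intro hroot
    obtain ⟨u, v, huv⟩ := hcop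
    have := congrArg (eval c) huv
    simp [hroot.eq_zero, hc.eq_zero] at this
  -- multiplicity bookkeeping
  set m := rootMultiplicity c q with hm
  set k := rootMultiplicity c p with hk
  set n := rootMultiplicity c N with hn
  have hcount : n + 1 = 2 * m := by
    have h1 := congrArg (rootMultiplicity c) key
    rw [rootMultiplicity_mul hNb0, rootMultiplicity_mul (key ▸ hNb0), sq,
      rootMultiplicity_mul (mul_ne_zero hq0 hq0), hrb, hra] at h1
    omega
  -- decompose p and q at c
  obtain ⟨P, hP, hPd⟩ := p.exists_eq_pow_rootMultiplicity_mul_and_not_dvd hp0 c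
  obtain ⟨Q, hQ, hQd⟩ := q.exists_eq_pow_rootMultiplicity_mul_and_not_dvd hq0 c
  have hPc : P.eval c ≠ 0 := fun h => hPd (dvd_iff_isRoot.mpr h)
  have hQc : Q.eval c ≠ 0 := fun h => hQd (dvd_iff_isRoot.mpr h)
  set R : ℂ[X] := (C (k : ℂ) - C (m : ℂ)) * (P * Q) +
      (X - C c) * (derivative P * Q - P * derivative Q) with hR
  have hid : (X - C c) * N = (X - C c) ^ (k + m) * R := by
    have h1 := aux_X_sub_C_mul_deriv c k
    have h2 := aux_X_sub_C_mul_deriv c m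
    rw [hNdef, hR]
    nth_rewrite 1 [hP, hQ]
    nth_rewrite 2 [hP]
    nth_rewrite 2 [hQ]
    rw [derivative_mul, derivative_mul, pow_add]
    linear_combination ((X - C c) ^ m * Q * P) * h1 - ((X - C c) ^ k * P * Q) * h2
  have hXN0 : (X - C c) * N ≠ 0 := mul_ne_zero (X_sub_C_ne_zero c) hN0
  have hR0 : R ≠ 0 := by
    intro h
    rw [h, mul_zero] at hid
    exact hXN0 hid
  have hmultid : 1 + n = (k + m) + rootMultiplicity c R := by
    have := congrArg (rootMultiplicity c) hid
    rwa [rootMultiplicity_mul hXN0, rootMultiplicity_mul (hid ▸ hXN0),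
      rootMultiplicity_X_sub_C_self, rootMultiplicity_X_sub_C_pow] at this
  by_cases hkm : k = m
  · -- R is divisible by X - C c, giving multiplicity ≥ 1
    have hRm : 1 ≤ rootMultiplicity c R := by
      apply (le_rootMultiplicity_iff hR0).mpr
      rw [pow_one, hR, hkm, sub_self, zero_mul, zero_add]
      exact dvd_mul_right _ _
    omega
  · have hRc : R.eval c ≠ 0 := by
      rw [hR]
      simp only [eval_add, eval_mul, eval_sub, eval_X, eval_C, sub_self, zero_mul, add_zero]
      refine mul_ne_zero (sub_ne_zero.mpr ?_) (mul_ne_zero hPc hQc)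
      exact_mod_cast fun h => hkm (Nat.cast_injective h)
    have : rootMultiplicity c R = 0 := rootMultiplicity_eq_zero (fun h => hRc h)
    omega
end

section
/- For every rational function f over ℂ there exist rational functions g and h over ℂ such that f = g' + h, where h can be written as a quotient a/b of polynomials with b squarefree (i.e., h has only simple poles), and g' denotes the derivative of g in ℂ(X). -/
open Polynomial

noncomputable abbrev φC : Polynomial ℂ →+* RatFunc ℂ := algebraMap (Polynomial ℂ) (RatFunc ℂ)

lemma comb (p₀ q₀ p₁ q₁ : Polynomial ℂ) (h₀ : q₀ ≠ 0) (h₁ : q₁ ≠ 0) :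
    φC (derivative p₀ * q₀ - p₀ * derivative q₀) / φC (q₀ ^ 2) +
      φC (derivative p₁ * q₁ - p₁ * derivative q₁) / φC (q₁ ^ 2) =
    φC (derivative (p₀ * q₁ + p₁ * q₀) * (q₀ * q₁) -
        (p₀ * q₁ + p₁ * q₀) * derivative (q₀ * q₁)) / φC ((q₀ * q₁) ^ 2) := by
  have e0 : φC q₀ ≠ 0 := RatFunc.algebraMap_ne_zero h₀
  have e1 : φC q₁ ≠ 0 := RatFunc.algebraMap_ne_zero h₁
  simp only [derivative_mul, derivative_add, map_sub, map_add, map_mul, map_pow]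
  field_simp
  ring

set_option maxHeartbeats 1000000 in
lemma step (k : ℕ) (r : ℂ) (σ τ c : Polynomial ℂ) (hc : c ≠ 0) :
    φC (σ * c + τ * (X - C r)) / φC ((X - C r) ^ (k + 2) * c) =
      φC (derivative (-(C ((k:ℂ)+1)⁻¹ * σ)) * (X - C r) ^ (k+1)
            - (-(C ((k:ℂ)+1)⁻¹ * σ)) * derivative ((X - C r) ^ (k+1))) /
        φC (((X - C r) ^ (k+1)) ^ 2) +
      φC (C ((k:ℂ)+1)⁻¹ * derivative σ * c + τ) / φC (c * (X - C r) ^ (k+1)) := by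
  have hv : (X - C r : Polynomial ℂ) ≠ 0 := X_sub_C_ne_zero r
  have hknz : ((k:ℂ)+1) ≠ 0 := Nat.cast_add_one_ne_zero k
  have hI : C ((k:ℂ)+1) * C ((k:ℂ)+1)⁻¹ = 1 := by
    rw [← C_mul, mul_inv_cancel₀ hknz, C_1]
  have h1 : φC ((X - C r) ^ (k + 2) * c) ≠ 0 :=
    RatFunc.algebraMap_ne_zero (mul_ne_zero (pow_ne_zero _ hv) hc)
  have h2 : φC (((X - C r : Polynomial ℂ)^(k+1))^2) ≠ 0 :=
    RatFunc.algebraMap_ne_zero (pow_ne_zero _ (pow_ne_zero _ hv))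
  have h3 : φC (c * (X - C r) ^ (k+1)) ≠ 0 :=
    RatFunc.algebraMap_ne_zero (mul_ne_zero hc (pow_ne_zero _ hv))
  rw [div_add_div _ _ h2 h3, div_eq_div_iff h1 (mul_ne_zero h2 h3)]
  simp only [← map_mul, ← map_add]
  congr 1
  have hdq : derivative ((X - C r : Polynomial ℂ) ^ (k+1)) = C ((k:ℂ)+1) * (X - C r) ^ k := by
    rw [derivative_pow]
    simp
  rw [hdq]
  simp only [derivative_neg, derivative_mul, derivative_C, zero_mul, zero_add]
  generalize hD : C ((k:ℂ)+1)⁻¹ = D at *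
  generalize hK : C ((k:ℂ)+1) = K at *
  linear_combination (-(σ * c^2 * (X - C r)^(3*k+3))) * hI

lemma key : ∀ n : ℕ, ∀ a b : Polynomial ℂ, b ≠ 0 → b.natDegree ≤ n →
    ∃ p q a' b' : Polynomial ℂ, q ≠ 0 ∧ Squarefree b' ∧
      φC a / φC b = φC (derivative p * q - p * derivative q) / φC (q ^ 2) + φC a' / φC b' := by
  intro n
  induction n with
  | zero =>
    intro a b hb hd
    have hbu : IsUnit b := by
      rw [Polynomial.eq_C_of_natDegree_eq_zero (Nat.le_zero.mp hd)] at hb ⊢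
      exact isUnit_C.mpr (by simpa using hb)
    exact ⟨0, 1, a, b, one_ne_zero, hbu.squarefree, by simp⟩
  | succ n ih =>
    intro a b hb hd
    by_cases hsf : Squarefree b
    · exact ⟨0, 1, a, b, one_ne_zero, hsf, by simp⟩
    · have hsep : ¬ b.Separable := fun h => hsf (PerfectField.separable_iff_squarefree.mp h)
      have hsplits : b.Splits := IsAlgClosed.splits b
      have hnd : ¬ b.roots.Nodup := fun h => hsep ((nodup_roots_iff_of_splits hb hsplits).mp h)
      rw [Multiset.nodup_iff_count_le_one] at hnd
      push_neg at hnd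
      obtain ⟨r, hr⟩ := hnd
      rw [count_roots] at hr
      set m := rootMultiplicity r b with hm
      set c : Polynomial ℂ := b /ₘ (X - C r) ^ m with hcdef
      have hbc : (X - C r) ^ m * c = b := pow_mul_divByMonic_rootMultiplicity_eq b r
      have hcr : eval r c ≠ 0 := eval_divByMonic_pow_rootMultiplicity_ne_zero r hb
      have hc : c ≠ 0 := fun h => hcr (by rw [h]; simp)
      obtain ⟨k, hk⟩ : ∃ k, m = k + 2 := ⟨m - 2, by omega⟩
      have hcop : IsCoprime (X - C r : Polynomial ℂ) c :=
        (irreducible_X_sub_C r).coprime_iff_not_dvd.mpr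
          (fun h => hcr ((dvd_iff_isRoot).mp h))
      obtain ⟨u, w, huw⟩ := hcop
      -- a = σ * c + τ * (X - C r)
      set σ : Polynomial ℂ := a * w with hσ
      set τ : Polynomial ℂ := a * u with hτ
      have ha : a = σ * c + τ * (X - C r) := by
        have := huw
        linear_combination (-a) * huw
      -- new fraction
      set a₁ : Polynomial ℂ := C ((k:ℂ)+1)⁻¹ * derivative σ * c + τ with ha₁
      set b₁ : Polynomial ℂ := c * (X - C r) ^ (k+1) with hb₁
      have hv : (X - C r : Polynomial ℂ) ≠ 0 := X_sub_C_ne_zero r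
      have hb₁0 : b₁ ≠ 0 := mul_ne_zero hc (pow_ne_zero _ hv)
      have hdeg : b₁.natDegree ≤ n := by
        have h1 : b.natDegree = (k+2) + c.natDegree := by
          rw [← hbc, natDegree_mul (pow_ne_zero _ hv) hc, natDegree_pow, natDegree_X_sub_C,
            hk, mul_one]
        have h2 : b₁.natDegree = c.natDegree + (k+1) := by
          rw [hb₁, natDegree_mul hc (pow_ne_zero _ hv), natDegree_pow, natDegree_X_sub_C,
            mul_one]
        omega
      obtain ⟨p₁, q₁, a', b', hq₁, hb', heq⟩ := ih a₁ b₁ hb₁0 hdeg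
      refine ⟨-(C ((k:ℂ)+1)⁻¹ * σ) * q₁ + p₁ * (X - C r) ^ (k+1),
        (X - C r) ^ (k+1) * q₁, a', b', mul_ne_zero (pow_ne_zero _ hv) hq₁, hb', ?_⟩
      calc φC a / φC b
          = φC (σ * c + τ * (X - C r)) / φC ((X - C r) ^ (k+2) * c) := by rw [← ha, ← hbc, hk]
        _ = φC (derivative (-(C ((k:ℂ)+1)⁻¹ * σ)) * (X - C r) ^ (k+1)
              - (-(C ((k:ℂ)+1)⁻¹ * σ)) * derivative ((X - C r) ^ (k+1))) /
              φC (((X - C r) ^ (k+1)) ^ 2) + φC a₁ / φC b₁ := step k r σ τ c hc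
        _ = _ := by
              rw [heq, ← add_assoc, comb _ _ _ _ (pow_ne_zero _ hv) hq₁]

/-- Every rational function `f` over `ℂ` decomposes as `f = g' + h` where `g = p/q` is a
rational function (with derivative `g' = (p'q − pq')/q²`) and `h = a/b` has a squarefree
denominator, i.e. only simple poles. -/
theorem rational_function_decomposition_simple_poles
    (f : RatFunc ℂ) :
    ∃ p q a b : Polynomial ℂ, q ≠ 0 ∧ Squarefree b ∧
      f = algebraMap (Polynomial ℂ) (RatFunc ℂ) (derivative p * q - p * derivative q) /
            algebraMap (Polynomial ℂ) (RatFunc ℂ) (q ^ 2) +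
          algebraMap (Polynomial ℂ) (RatFunc ℂ) a /
            algebraMap (Polynomial ℂ) (RatFunc ℂ) b := by
  obtain ⟨p, q, a, b, hq, hb, h⟩ := key f.denom.natDegree f.num f.denom f.denom_ne_zero le_rfl
  exact ⟨p, q, a, b, hq, hb, by rw [← h, RatFunc.num_div_denom]⟩
end

section
/- Let m₀ and m₁ be the 8×8 complex matrices with m₀ having a 1 in entries (1,2), (2,3), (3,4) and zeros elsewhere, and m₁ having a 1 in entries (1,5), (2,6), (3,7), (4,8) and zeros elsewhere. Then the commutator ⁅m₀, m₁⁆ = m₀·m₁ − m₁·m₀ is nonzero, and the Lie subalgebra of 8×8 complex matrices (with bracket the commutator) generated by {m₀, m₁} has dimension 5 as a complex vector space. -/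
open Matrix

attribute [local instance] LieRing.ofAssociativeRing

namespace PolylogAux

noncomputable abbrev E (i j : Fin 8) : Matrix (Fin 8) (Fin 8) ℂ :=
  Matrix.single i j 1

noncomputable def m0 : Matrix (Fin 8) (Fin 8) ℂ := E 0 1 + E 1 2 + E 2 3
noncomputable def m1 : Matrix (Fin 8) (Fin 8) ℂ := E 0 4 + E 1 5 + E 2 6 + E 3 7
noncomputable def m2 : Matrix (Fin 8) (Fin 8) ℂ := E 0 5 + E 1 6 + E 2 7
noncomputable def m3 : Matrix (Fin 8) (Fin 8) ℂ := E 0 6 + E 1 7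
noncomputable def m4 : Matrix (Fin 8) (Fin 8) ℂ := E 0 7

noncomputable def v : Fin 5 → Matrix (Fin 8) (Fin 8) ℂ := ![m0, m1, m2, m3, m4]

lemma b01 : ⁅m0, m1⁆ = m2 := by
  simp (config := {decide := true}) [m0, m1, m2, Ring.lie_def, add_mul, mul_add,
    Matrix.single_mul_single_same, Matrix.single_mul_single_of_ne]

lemma b02 : ⁅m0, m2⁆ = m3 := by
  simp (config := {decide := true}) [m0, m2, m3, Ring.lie_def, add_mul, mul_add,
    Matrix.single_mul_single_same, Matrix.single_mul_single_of_ne]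

lemma b03 : ⁅m0, m3⁆ = m4 := by
  simp (config := {decide := true}) [m0, m3, m4, Ring.lie_def, add_mul, mul_add,
    Matrix.single_mul_single_same, Matrix.single_mul_single_of_ne]

lemma b04 : ⁅m0, m4⁆ = 0 := by
  simp (config := {decide := true}) [m0, m4, Ring.lie_def, add_mul, mul_add,
    Matrix.single_mul_single_same, Matrix.single_mul_single_of_ne]

lemma b12 : ⁅m1, m2⁆ = 0 := by
  simp (config := {decide := true}) [m1, m2, Ring.lie_def, add_mul, mul_add,
    Matrix.single_mul_single_same, Matrix.single_mul_single_of_ne]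

lemma b13 : ⁅m1, m3⁆ = 0 := by
  simp (config := {decide := true}) [m1, m3, Ring.lie_def, add_mul, mul_add,
    Matrix.single_mul_single_same, Matrix.single_mul_single_of_ne]

lemma b14 : ⁅m1, m4⁆ = 0 := by
  simp (config := {decide := true}) [m1, m4, Ring.lie_def, add_mul, mul_add,
    Matrix.single_mul_single_same, Matrix.single_mul_single_of_ne]

lemma b23 : ⁅m2, m3⁆ = 0 := by
  simp (config := {decide := true}) [m2, m3, Ring.lie_def, add_mul, mul_add,
    Matrix.single_mul_single_same, Matrix.single_mul_single_of_ne]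

lemma b24 : ⁅m2, m4⁆ = 0 := by
  simp (config := {decide := true}) [m2, m4, Ring.lie_def, add_mul, mul_add,
    Matrix.single_mul_single_same, Matrix.single_mul_single_of_ne]

lemma b34 : ⁅m3, m4⁆ = 0 := by
  simp (config := {decide := true}) [m3, m4, Ring.lie_def, add_mul, mul_add,
    Matrix.single_mul_single_same, Matrix.single_mul_single_of_ne]

lemma range_v : Set.range v = {m0, m1, m2, m3, m4} := by
  simp only [v, Matrix.range_cons, Matrix.range_empty, Set.union_empty,
    Set.singleton_union]

/-- The span of the five generators. -/
noncomputable def K : Submodule ℂ (Matrix (Fin 8) (Fin 8) ℂ) :=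
  Submodule.span ℂ (Set.range v)

lemma vmem (i : Fin 5) : v i ∈ K := Submodule.subset_span ⟨i, rfl⟩

lemma bracket_gen_mem : ∀ x ∈ Set.range v, ∀ y ∈ Set.range v, ⁅x, y⁆ ∈ K := by
  have h0 : m0 ∈ K := vmem 0
  have h1 : m1 ∈ K := vmem 1
  have h2 : m2 ∈ K := vmem 2
  have h3 : m3 ∈ K := vmem 3
  have h4 : m4 ∈ K := vmem 4
  rw [range_v]
  rintro x (rfl | rfl | rfl | rfl | rfl) y (rfl | rfl | rfl | rfl | rfl) <;>
    first
      | (rw [lie_self]; exact K.zero_mem)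
      | (rw [b01]; exact h2)
      | (rw [b02]; exact h3)
      | (rw [b03]; exact h4)
      | (rw [b04]; exact K.zero_mem)
      | (rw [b12]; exact K.zero_mem)
      | (rw [b13]; exact K.zero_mem)
      | (rw [b14]; exact K.zero_mem)
      | (rw [b23]; exact K.zero_mem)
      | (rw [b24]; exact K.zero_mem)
      | (rw [b34]; exact K.zero_mem)
      | (rw [← lie_skew]
         first
           | (rw [b01]; exact K.neg_mem h2)
           | (rw [b02]; exact K.neg_mem h3)
           | (rw [b03]; exact K.neg_mem h4)
           | (rw [b04, neg_zero]; exact K.zero_mem)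
           | (rw [b12, neg_zero]; exact K.zero_mem)
           | (rw [b13, neg_zero]; exact K.zero_mem)
           | (rw [b14, neg_zero]; exact K.zero_mem)
           | (rw [b23, neg_zero]; exact K.zero_mem)
           | (rw [b24, neg_zero]; exact K.zero_mem)
           | (rw [b34, neg_zero]; exact K.zero_mem))

lemma bracket_mem {x y : Matrix (Fin 8) (Fin 8) ℂ} (hx : x ∈ K) (hy : y ∈ K) :
    ⁅x, y⁆ ∈ K := by
  induction hx using Submodule.span_induction with
  | mem a ha =>
    induction hy using Submodule.span_induction with
    | mem b hb => exact bracket_gen_mem a ha b hb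
    | zero => rw [lie_zero]; exact K.zero_mem
    | add b c _ _ hb hc => rw [lie_add]; exact K.add_mem hb hc
    | smul t b _ hb => rw [lie_smul]; exact K.smul_mem t hb
  | zero => rw [zero_lie]; exact K.zero_mem
  | add a b _ _ ha hb => rw [add_lie]; exact K.add_mem ha hb
  | smul t a _ ha => rw [smul_lie]; exact K.smul_mem t ha

/-- The five generators span a Lie subalgebra. -/
noncomputable def Kalg : LieSubalgebra ℂ (Matrix (Fin 8) (Fin 8) ℂ) :=
  { K with lie_mem' := fun hx hy => bracket_mem hx hy }

set_option maxHeartbeats 1000000 in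
lemma linindep : LinearIndependent ℂ v := by
  rw [Fintype.linearIndependent_iff]
  intro g h
  have e : ∀ a b : Fin 8, (∑ i, g i • v i) a b = 0 := by
    intro a b; rw [h]; rfl
  have e1 := e 0 1
  have e4 := e 0 4
  have e5 := e 0 5
  have e6 := e 0 6
  have e7 := e 0 7
  simp only [v, Fin.sum_univ_five, Matrix.cons_val_zero, Matrix.cons_val_one, Matrix.head_cons,
    Matrix.cons_val_two, Matrix.tail_cons, Matrix.cons_val_three, Matrix.cons_val_four,
    m0, m1, m2, m3, m4, Matrix.add_apply, Matrix.smul_apply, Matrix.single,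
    Matrix.of_apply, smul_eq_mul] at e1 e4 e5 e6 e7
  norm_num (config := {decide := true}) at e1 e4 e5 e6 e7
  intro i
  fin_cases i
  · exact e1
  · exact e4
  · exact e5
  · exact e6
  · exact e7

lemma mem_lie : ∀ i : Fin 5, v i ∈ LieSubalgebra.lieSpan ℂ (Matrix (Fin 8) (Fin 8) ℂ) {m0, m1} := by
  have h0 : m0 ∈ LieSubalgebra.lieSpan ℂ (Matrix (Fin 8) (Fin 8) ℂ) {m0, m1} :=
    LieSubalgebra.subset_lieSpan (by simp)
  have h1 : m1 ∈ LieSubalgebra.lieSpan ℂ (Matrix (Fin 8) (Fin 8) ℂ) {m0, m1} :=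
    LieSubalgebra.subset_lieSpan (by simp)
  have h2 := LieSubalgebra.lie_mem _ h0 h1
  rw [b01] at h2
  have h3 := LieSubalgebra.lie_mem _ h0 h2
  rw [b02] at h3
  have h4 := LieSubalgebra.lie_mem _ h0 h3
  rw [b03] at h4
  intro i
  fin_cases i
  · exact h0
  · exact h1
  · exact h2
  · exact h3
  · exact h4

lemma span_eq : LieSubalgebra.lieSpan ℂ (Matrix (Fin 8) (Fin 8) ℂ) {m0, m1} = Kalg := by
  apply le_antisymm
  · rw [LieSubalgebra.lieSpan_le]
    rintro x (rfl | rfl)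
    · exact vmem 0
    · exact vmem 1
  · intro x hx
    have hx' : x ∈ K := hx
    refine Submodule.span_le.mpr ?_ hx'
    rintro y ⟨i, rfl⟩
    exact mem_lie i

lemma finrank_K : Module.finrank ℂ K = 5 := by
  rw [K, finrank_span_eq_card linindep]
  simp

set_option maxHeartbeats 1000000 in
lemma hm0 : (!![0,1,0,0,0,0,0,0;
         0,0,1,0,0,0,0,0;
         0,0,0,1,0,0,0,0;
         0,0,0,0,0,0,0,0;
         0,0,0,0,0,0,0,0;
         0,0,0,0,0,0,0,0;
         0,0,0,0,0,0,0,0;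
         0,0,0,0,0,0,0,0] : Matrix (Fin 8) (Fin 8) ℂ) = m0 := by
  ext i j
  fin_cases i <;> fin_cases j <;> simp [m0, Matrix.single] <;> rfl

set_option maxHeartbeats 1000000 in
lemma hm1 : (!![0,0,0,0,1,0,0,0;
         0,0,0,0,0,1,0,0;
         0,0,0,0,0,0,1,0;
         0,0,0,0,0,0,0,1;
         0,0,0,0,0,0,0,0;
         0,0,0,0,0,0,0,0;
         0,0,0,0,0,0,0,0;
         0,0,0,0,0,0,0,0] : Matrix (Fin 8) (Fin 8) ℂ) = m1 := by
  ext i j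
  fin_cases i <;> fin_cases j <;> simp [m1, Matrix.single] <;> rfl

end PolylogAux

open PolylogAux in
/-- The matrices `m₀` and `m₁` arising from the Galois action on polylogarithms do not
commute, and the Lie algebra they generate has dimension 5. -/
theorem polylog_lie_algebra_dim_five :
    ⁅(!![0,1,0,0,0,0,0,0;
         0,0,1,0,0,0,0,0;
         0,0,0,1,0,0,0,0;
         0,0,0,0,0,0,0,0;
         0,0,0,0,0,0,0,0;
         0,0,0,0,0,0,0,0;
         0,0,0,0,0,0,0,0;
         0,0,0,0,0,0,0,0] : Matrix (Fin 8) (Fin 8) ℂ),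
      (!![0,0,0,0,1,0,0,0;
         0,0,0,0,0,1,0,0;
         0,0,0,0,0,0,1,0;
         0,0,0,0,0,0,0,1;
         0,0,0,0,0,0,0,0;
         0,0,0,0,0,0,0,0;
         0,0,0,0,0,0,0,0;
         0,0,0,0,0,0,0,0] : Matrix (Fin 8) (Fin 8) ℂ)⁆ ≠ 0 ∧
    Module.finrank ℂ
      (LieSubalgebra.lieSpan ℂ (Matrix (Fin 8) (Fin 8) ℂ)
        {!![0,1,0,0,0,0,0,0;
            0,0,1,0,0,0,0,0;
            0,0,0,1,0,0,0,0;
            0,0,0,0,0,0,0,0;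
            0,0,0,0,0,0,0,0;
            0,0,0,0,0,0,0,0;
            0,0,0,0,0,0,0,0;
            0,0,0,0,0,0,0,0],
         !![0,0,0,0,1,0,0,0;
            0,0,0,0,0,1,0,0;
            0,0,0,0,0,0,1,0;
            0,0,0,0,0,0,0,1;
            0,0,0,0,0,0,0,0;
            0,0,0,0,0,0,0,0;
            0,0,0,0,0,0,0,0;
            0,0,0,0,0,0,0,0]}) = 5 := by
  rw [hm0, hm1]
  constructor
  · rw [b01]
    intro h
    have h05 : m2 0 5 = (0 : ℂ) := by rw [h]; rfl
    rw [show m2 0 5 = 1 by simp [m2, Matrix.single]] at h05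
    exact one_ne_zero h05
  · rw [span_eq]
    exact finrank_K
end
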